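/- Let c_1, …, c_d : N → ℝ≥0 be cost functions and λ ≥ 1 an integer. Let S ⊆ N satisfy (i) c_i(S) > 1 for some 1 ≤ i ≤ d, and (ii) max_{1≤i≤d} c_i(u) ≤ 1/λ for every u ∈ S. Then there exists a subset T ⊆ S with max_{1≤i≤d} c_i(T) ≤ 1 and Σ_{i=1}^{d} c_i(T) ≥ λ/(λ+1). -/

import Mathlib

open Finset

/-- SetExtract guarantee. -/
theorem stmt_6 {α : Type*} [DecidableEq α] (d lam : ℕ) (hd : 1 ≤ d) (hlam : 1 ≤ lam)
    (c : Fin d → α → ℝ) (hc : ∀ i u, 0 ≤ c i u)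
    (S : Finset α)
    (hviol : ∃ i : Fin d, 1 < ∑ u ∈ S, c i u)
    (hsmall : ∀ u ∈ S, ∀ i : Fin d, c i u ≤ 1 / (lam : ℝ)) :
    ∃ T ⊆ S, (∀ i : Fin d, ∑ u ∈ T, c i u ≤ 1) ∧
      (lam : ℝ) / ((lam : ℝ) + 1) ≤ ∑ i : Fin d, ∑ u ∈ T, c i u := by
  classical
  set L : ℝ := (lam : ℝ) with hL
  have hL1 : 1 ≤ L := by rw [hL]; exact_mod_cast hlam
  have hL0 : 0 < L := lt_of_lt_of_le one_pos hL1
  have hLp : 0 < L + 1 := by linarith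
  have hfrac : 0 < L / (L + 1) := div_pos hL0 hLp
  have hfrac1 : L / (L + 1) < 1 := (div_lt_one hLp).mpr (by linarith)
  set P : Finset α → Prop := fun T => ∃ j : Fin d, L / (L + 1) < ∑ u ∈ T, c j u with hP
  have hSP : S ∈ S.powerset.filter P := by
    simp only [mem_filter, mem_powerset]
    refine ⟨Finset.Subset.refl _, ?_⟩
    obtain ⟨i, hi⟩ := hviol
    exact ⟨i, lt_trans hfrac1 hi⟩
  obtain ⟨T, hTmem, hTmin⟩ := (S.powerset.filter P).exists_min_image card ⟨S, hSP⟩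
  rw [mem_filter, mem_powerset] at hTmem
  obtain ⟨hTS, j0, hj0⟩ := hTmem
  have herase : ∀ v ∈ T, ∀ j : Fin d, ∑ u ∈ T.erase v, c j u ≤ L / (L + 1) := by
    intro v hv j
    by_contra h
    push_neg at h
    have hmem : T.erase v ∈ S.powerset.filter P := by
      rw [mem_filter, mem_powerset]
      exact ⟨(erase_subset v T).trans hTS, ⟨j, h⟩⟩
    have h1 := hTmin _ hmem
    have hcard := card_erase_lt_of_mem hv
    omega
  have hTle : ∀ j : Fin d, ∑ u ∈ T, c j u ≤ 1 := by
    intro j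
    by_cases hcard : T.card ≤ lam
    · calc ∑ u ∈ T, c j u ≤ ∑ _u ∈ T, 1 / L :=
            sum_le_sum fun u hu => hsmall u (hTS hu) j
      _ = T.card * (1 / L) := by rw [sum_const, nsmul_eq_mul]
      _ ≤ lam * (1 / L) := by
            apply mul_le_mul_of_nonneg_right _ (by positivity)
            exact_mod_cast hcard
      _ = 1 := by field_simp; exact hL.symm
    · push_neg at hcard
      have hne : T.Nonempty := card_pos.mp (by omega)
      obtain ⟨v, hv, hvmin⟩ := T.exists_min_image (c j) hne
      have hsum : (T.card : ℝ) * c j v ≤ ∑ u ∈ T, c j u := by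
        calc (T.card : ℝ) * c j v = ∑ _u ∈ T, c j v := by
              rw [sum_const, nsmul_eq_mul]
        _ ≤ ∑ u ∈ T, c j u := sum_le_sum fun u hu => hvmin u hu
      have hsplit : c j v + ∑ u ∈ T.erase v, c j u = ∑ u ∈ T, c j u :=
        add_sum_erase T (c j) hv
      have hE := herase v hv j
      have hcardR : L + 1 ≤ (T.card : ℝ) := by
        rw [hL]; push_cast; exact_mod_cast Nat.succ_le_of_lt hcard
      by_contra hgt
      push_neg at hgt
      -- sum > 1, card * c v ≤ sum, sum = c v + E, E ≤ L/(L+1), card ≥ L+1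
      have hEmul : (∑ u ∈ T.erase v, c j u) * (L + 1) ≤ L := by
        rw [le_div_iff₀ hLp] at hE
        exact hE
      have hcpos : (0:ℝ) < (T.card : ℝ) := by linarith
      nlinarith [hsum, hsplit, hEmul, mul_pos hcpos hLp,
        mul_le_mul_of_nonneg_right hE (le_of_lt hcpos)]
  refine ⟨T, hTS, hTle, ?_⟩
  calc L / (L + 1) ≤ ∑ u ∈ T, c j0 u := le_of_lt hj0
    _ ≤ ∑ i : Fin d, ∑ u ∈ T, c i u :=
        single_le_sum (f := fun i => ∑ u ∈ T, c i u)
          (fun i _ => sum_nonneg fun u _ => hc i u) (mem_univ j0)
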